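/- Fix an integer k ≥ 1 and m > 0, and let Ψ(u) = ∫_0^u exp(−(m/(k+1)) t^{k+1}) dt and C_β = ∫_0^∞ exp(−(m/(k+1)) t^{k+1}) dt, with Ψ⁻¹ the inverse of Ψ restricted to [0, ∞). Define f(s) = Ψ'(Ψ⁻¹((1−s)C_β)) · Ψ⁻¹((1−s)C_β) for s ∈ (0,1), where Ψ'(t) = exp(−(m/(k+1)) t^{k+1}). Then f(s) / ( s (ln s)² ) → 0 as s → 0⁺, and f(s) → 0 as s → 0⁺. -/

import Mathlib

open MeasureTheory Filter Set
open scoped Topology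

/-- `Ψ(u) = ∫₀ᵘ exp(−(m/(k+1)) t^{k+1}) dt`, the change of variables in the model case
`β(s) = s^k`. -/
noncomputable def PsiK (k : ℕ) (m : ℝ) (u : ℝ) : ℝ :=
  ∫ t in (0:ℝ)..u, Real.exp (-(m / ((k:ℝ) + 1)) * t ^ (k + 1))

/-- `C_β = ∫₀^∞ exp(−(m/(k+1)) t^{k+1}) dt`. -/
noncomputable def CbetaK (k : ℕ) (m : ℝ) : ℝ :=
  ∫ t in Set.Ioi (0:ℝ), Real.exp (-(m / ((k:ℝ) + 1)) * t ^ (k + 1))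

/-- The inverse `Ψ⁻¹` of the (strictly increasing) map `Ψ`. -/
noncomputable def PsiKInv (k : ℕ) (m : ℝ) : ℝ → ℝ :=
  Function.invFun (PsiK k m)

/-- `Ψ'(u) = exp(−(m/(k+1)) u^{k+1})`. -/
noncomputable def PsiK' (k : ℕ) (m : ℝ) (u : ℝ) : ℝ :=
  Real.exp (-(m / ((k:ℝ) + 1)) * u ^ (k + 1))

/-- `f(s) = Ψ'(Ψ⁻¹((1−s)C_β)) · Ψ⁻¹((1−s)C_β)`. -/
noncomputable def fK (k : ℕ) (m : ℝ) (s : ℝ) : ℝ :=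
  PsiK' k m (PsiKInv k m ((1 - s) * CbetaK k m)) * PsiKInv k m ((1 - s) * CbetaK k m)

section
variable (k : ℕ) (m : ℝ)

lemma psiK'_pos (t : ℝ) : 0 < PsiK' k m t := Real.exp_pos _
lemma psiK'_cont : Continuous (PsiK' k m) := by unfold PsiK'; fun_prop
lemma psiK'_integrableOn (hm : 0 < m) (a : ℝ) : IntegrableOn (PsiK' k m) (Ioi a) := by
  have hc : 0 < m / ((k:ℝ)+1) := by positivity
  set c := m / ((k:ℝ)+1) with hcdef
  set b := max a 1 with hb
  have h1 : IntegrableOn (PsiK' k m) (Ioi b) := by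
    apply Integrable.mono' (g := fun x => Real.exp (-c * x)) (exp_neg_integrableOn_Ioi b hc)
      ((psiK'_cont k m).aestronglyMeasurable.restrict)
    filter_upwards [ae_restrict_mem measurableSet_Ioi] with x hx
    have hx1 : (1:ℝ) ≤ x := le_trans (le_max_right a 1) (le_of_lt hx)
    have : x ≤ x ^ (k+1) := le_self_pow₀ (by linarith) (Nat.succ_ne_zero k)
    rw [Real.norm_eq_abs, abs_of_pos (psiK'_pos k m x)]
    exact Real.exp_le_exp.2 (by nlinarith)
  have h2 : IntegrableOn (PsiK' k m) (Ioc a b) :=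
    ((psiK'_cont k m).integrableOn_Ioc)
  have := h2.union h1
  rwa [Ioc_union_Ioi_eq_Ioi (le_max_left a 1)] at this

lemma psiK_eq (u : ℝ) : PsiK k m u = ∫ t in (0:ℝ)..u, PsiK' k m t := rfl
lemma cbetaK_eq : CbetaK k m = ∫ t in Set.Ioi (0:ℝ), PsiK' k m t := rfl

lemma psiK_strictMono : StrictMono (PsiK k m) := by
  intro a b hab
  have hint : ∀ x y : ℝ, IntervalIntegrable (PsiK' k m) volume x y :=
    fun x y => (psiK'_cont k m).intervalIntegrable x y
  have := intervalIntegral.integral_add_adjacent_intervals (hint 0 a) (hint a b)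
  rw [psiK_eq, psiK_eq, ← this]
  have : 0 < ∫ t in a..b, PsiK' k m t :=
    intervalIntegral.intervalIntegral_pos_of_pos (hint a b) (psiK'_pos k m) hab
  linarith

lemma psiK_hasDerivAt (u : ℝ) : HasDerivAt (PsiK k m) (PsiK' k m u) u := by
  apply intervalIntegral.integral_hasDerivAt_right
    ((psiK'_cont k m).intervalIntegrable 0 u)
    ((psiK'_cont k m).stronglyMeasurableAtFilter _ _)
    (psiK'_cont k m).continuousAt

lemma psiK_cont : Continuous (PsiK k m) :=
  by
    exact continuous_iff_continuousAt.2 fun u => (psiK_hasDerivAt k m u).continuousAt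
end

section
variable (k : ℕ) (m : ℝ)

lemma psiK_zero : PsiK k m 0 = 0 := by
  rw [psiK_eq, intervalIntegral.integral_same]

lemma psiK_tendsto (hm : 0 < m) : Tendsto (PsiK k m) atTop (𝓝 (CbetaK k m)) := by
  rw [cbetaK_eq]
  exact intervalIntegral_tendsto_integral_Ioi 0 (psiK'_integrableOn k m hm 0) tendsto_id

lemma psiK_lt_cbeta (hm : 0 < m) (u : ℝ) : PsiK k m u < CbetaK k m := by
  have h1 : PsiK k m u < PsiK k m (u+1) := psiK_strictMono k m (by linarith)
  have h2 : PsiK k m (u+1) ≤ CbetaK k m := by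
    apply ge_of_tendsto (psiK_tendsto k m hm)
    filter_upwards [Ici_mem_atTop (u+1)] with v hv
    exact (psiK_strictMono k m).monotone hv
  linarith

lemma cbetaK_pos (hm : 0 < m) : 0 < CbetaK k m := by
  have := psiK_lt_cbeta k m hm 0
  rwa [psiK_zero] at this

lemma psiK_invFun_eq (hm : 0 < m) {y : ℝ} (h0 : 0 ≤ y) (hy : y < CbetaK k m) :
    PsiK k m (PsiKInv k m y) = y := by
  have hex : ∃ u, PsiK k m u = y := by
    have : ∀ᶠ v in atTop, y < PsiK k m v :=
      (psiK_tendsto k m hm).eventually (eventually_gt_nhds hy)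
    obtain ⟨N, hN⟩ := this.exists
    have h0N : (0:ℝ) ≤ max N 0 := le_max_right _ _
    have hNN : PsiK k m N ≤ PsiK k m (max N 0) :=
      (psiK_strictMono k m).monotone (le_max_left _ _)
    have : y ∈ Icc (PsiK k m 0) (PsiK k m (max N 0)) := by
      rw [psiK_zero]; exact ⟨h0, by linarith⟩
    obtain ⟨u, _, hu⟩ := intermediate_value_Icc h0N ((psiK_cont k m).continuousOn) this
    exact ⟨u, hu⟩
  exact Function.invFun_eq hex

lemma psiKInv_nonneg (hm : 0 < m) {y : ℝ} (h0 : 0 ≤ y) (hy : y < CbetaK k m) :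
    0 ≤ PsiKInv k m y := by
  by_contra h
  push_neg at h
  have := psiK_strictMono k m h
  rw [psiK_invFun_eq k m hm h0 hy, psiK_zero] at this
  linarith

lemma tail_eq (hm : 0 < m) {u : ℝ} (hu : 0 ≤ u) :
    ∫ t in Ioi u, PsiK' k m t = CbetaK k m - PsiK k m u := by
  have hdisj : Disjoint (Ioc 0 u) (Ioi u) := Ioc_disjoint_Ioi le_rfl
  have hunion : Ioc (0:ℝ) u ∪ Ioi u = Ioi 0 := Ioc_union_Ioi_eq_Ioi hu
  have h1 : IntegrableOn (PsiK' k m) (Ioc 0 u) := (psiK'_cont k m).integrableOn_Ioc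
  have h2 : IntegrableOn (PsiK' k m) (Ioi u) := psiK'_integrableOn k m hm u
  have := setIntegral_union hdisj measurableSet_Ioi h1 h2
  rw [hunion] at this
  have hpsi : PsiK k m u = ∫ t in Ioc 0 u, PsiK' k m t := by
    rw [psiK_eq, intervalIntegral.integral_of_le hu]
  rw [cbetaK_eq, this, hpsi]
  ring
end

section
variable (k : ℕ) (m : ℝ)

lemma auxH_hasDerivAt (hm : 0 < m) (t : ℝ) :
    HasDerivAt (fun t : ℝ => -(1/m) * Real.exp (-(m / ((k:ℝ)+1)) * t^(k+1)))
      (t^k * PsiK' k m t) t := by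
  have hc : (0:ℝ) < (k:ℝ)+1 := by positivity
  set c := m / ((k:ℝ)+1) with hcdef
  have hcm : c * ((k:ℝ)+1) = m := div_mul_cancel₀ _ (ne_of_gt hc)
  have h1 : HasDerivAt (fun t : ℝ => -c * t^(k+1)) (-c * (((k:ℝ)+1) * t^k)) t := by
    have := (hasDerivAt_pow (k+1) t).const_mul (-c)
    have hcast : ((k+1 : ℕ) : ℝ) = (k:ℝ)+1 := by push_cast; ring
    simpa [hcast] using this
  have h2 := (Real.hasDerivAt_exp (-c * t^(k+1))).comp t h1
  have h3 := h2.const_mul (-(1/m))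
  refine h3.congr_deriv ?_
  unfold PsiK'
  rw [← hcdef]
  rw [show -(1/m) * (Real.exp (-c * t^(k+1)) * (-c * (((k:ℝ)+1) * t^k)))
      = (c*((k:ℝ)+1)/m) * (t^k * Real.exp (-c*t^(k+1))) by ring,
    hcm, div_self (ne_of_gt hm), one_mul]

lemma auxH_tendsto (hm : 0 < m) :
    Tendsto (fun t : ℝ => -(1/m) * Real.exp (-(m / ((k:ℝ)+1)) * t^(k+1))) atTop (𝓝 0) := by
  have hc : (0:ℝ) < m / ((k:ℝ)+1) := by positivity
  have h1 : Tendsto (fun t : ℝ => t^(k+1)) atTop atTop := tendsto_pow_atTop (Nat.succ_ne_zero k)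
  have h2 : Tendsto (fun t : ℝ => -(m / ((k:ℝ)+1)) * t^(k+1)) atTop atBot :=
    h1.const_mul_atTop_of_neg (by linarith)
  have h3 := (Real.tendsto_exp_atBot).comp h2
  have := h3.const_mul (-(1/m))
  simpa using this

lemma integral_pow_mul (hm : 0 < m) {u : ℝ} (hu : 0 ≤ u) :
    ∫ t in Ioi u, t^k * PsiK' k m t = PsiK' k m u / m := by
  have := integral_Ioi_of_hasDerivAt_of_nonneg'
    (fun x _ => auxH_hasDerivAt k m hm x)
    (fun x hx => by
      have hx0 : (0:ℝ) < x := lt_of_le_of_lt hu hx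
      exact mul_nonneg (pow_nonneg hx0.le k) (psiK'_pos k m x).le)
    (auxH_tendsto k m hm)
  rw [this]
  unfold PsiK'
  field_simp
  ring

lemma integrable_pow_mul (hm : 0 < m) {u : ℝ} (hu : 0 ≤ u) :
    IntegrableOn (fun t => t^k * PsiK' k m t) (Ioi u) := by
  exact integrableOn_Ioi_deriv_of_nonneg'
    (fun x _ => auxH_hasDerivAt k m hm x)
    (fun x hx => by
      have hx0 : (0:ℝ) < x := lt_of_le_of_lt hu hx
      exact mul_nonneg (pow_nonneg hx0.le k) (psiK'_pos k m x).le)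
    (auxH_tendsto k m hm)
end

section
variable (k : ℕ) (m : ℝ)

lemma tail_upper (hm : 0 < m) {u : ℝ} (hu : 1 ≤ u) :
    ∫ t in Ioi u, PsiK' k m t ≤ PsiK' k m u / (m * u^k) := by
  have hu0 : (0:ℝ) < u := lt_of_lt_of_le one_pos hu
  have huk : (0:ℝ) < u^k := pow_pos hu0 k
  have h1 : ∫ t in Ioi u, PsiK' k m t ≤ ∫ t in Ioi u, (u^k)⁻¹ * (t^k * PsiK' k m t) := by
    apply setIntegral_mono_on (psiK'_integrableOn k m hm u)
      ((integrable_pow_mul k m hm hu0.le).const_mul _) measurableSet_Ioi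
    intro t ht
    have htu : u ≤ t := (le_of_lt ht)
    have hkk : u^k ≤ t^k := pow_le_pow_left₀ hu0.le htu k
    have h2 : (1:ℝ) ≤ (u^k)⁻¹ * t^k := by
      rw [inv_mul_eq_div]
      exact (one_le_div huk).2 hkk
    calc PsiK' k m t = 1 * PsiK' k m t := (one_mul _).symm
      _ ≤ ((u^k)⁻¹ * t^k) * PsiK' k m t :=
          mul_le_mul_of_nonneg_right h2 (psiK'_pos k m t).le
      _ = (u^k)⁻¹ * (t^k * PsiK' k m t) := by ring
  rw [MeasureTheory.integral_const_mul, integral_pow_mul k m hm hu0.le] at h1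
  calc ∫ t in Ioi u, PsiK' k m t ≤ (u^k)⁻¹ * (PsiK' k m u / m) := h1
    _ = PsiK' k m u / (m * u^k) := by ring

lemma one_add_pow_le (n : ℕ) {x : ℝ} (h0 : 0 ≤ x) (h1 : x ≤ 1) :
    (1+x)^n ≤ 1 + ((2:ℝ)^n - 1)*x := by
  induction n with
  | zero => simp
  | succ n ih =>
    have hx2 : x^2 ≤ x := by nlinarith
    have h2 : (1:ℝ) ≤ 2^n := one_le_pow₀ (by norm_num)
    have h3 : (0:ℝ) ≤ 1 + x := by linarith
    calc (1+x)^(n+1) = (1+x)^n * (1+x) := by ring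
      _ ≤ (1 + ((2:ℝ)^n-1)*x) * (1+x) := by nlinarith
      _ ≤ 1 + ((2:ℝ)^(n+1)-1)*x := by rw [pow_succ]; nlinarith

lemma tail_lower (hm : 0 < m) {u : ℝ} (hu : 1 ≤ u) :
    Real.exp (-(m / ((k:ℝ)+1)) * ((2:ℝ)^(k+1) - 1)) * PsiK' k m u / u^k
      ≤ ∫ t in Ioi u, PsiK' k m t := by
  have hu0 : (0:ℝ) < u := lt_of_lt_of_le one_pos hu
  have huk : (0:ℝ) < u^k := pow_pos hu0 k
  have huk1 : (0:ℝ) < u^(k+1) := pow_pos hu0 (k+1)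
  set c := m / ((k:ℝ)+1) with hcdef
  have hc : 0 < c := by positivity
  set x := (u^(k+1))⁻¹ with hxdef
  have hx0 : 0 < x := by positivity
  have hx1 : x ≤ 1 := by
    rw [hxdef]
    have : (1:ℝ) ≤ u^(k+1) := one_le_pow₀ hu
    exact inv_le_one_of_one_le₀ this
  set v := u + (u^k)⁻¹ with hvdef
  have hvu : v = u * (1+x) := by
    have huu : u * (u^(k+1))⁻¹ = (u^k)⁻¹ := by
      rw [pow_succ, mul_inv, mul_comm ((u^k)⁻¹), ← mul_assoc, mul_inv_cancel₀ hu0.ne', one_mul]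
    rw [hvdef, hxdef, mul_add, mul_one, huu]
  have huv : u < v := by
    rw [hvdef]
    have : (0:ℝ) < (u^k)⁻¹ := by positivity
    linarith
  set B := Real.exp (-c * ((2:ℝ)^(k+1) - 1)) with hBdef
  clear_value c x v B
  -- pointwise bound on Ioc u v
  have hpt : ∀ t ∈ Ioc u v, B * PsiK' k m u ≤ PsiK' k m t := by
    intro t ht
    have ht0 : 0 < t := lt_trans hu0 ht.1
    have htv : t^(k+1) ≤ v^(k+1) := pow_le_pow_left₀ ht0.le ht.2 (k+1)
    have hv1 : v^(k+1) = u^(k+1) * (1+x)^(k+1) := by rw [hvu, mul_pow]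
    have h2 : (1+x)^(k+1) ≤ 1 + ((2:ℝ)^(k+1)-1)*x := one_add_pow_le (k+1) hx0.le hx1
    have h3 : u^(k+1) * x = 1 := by rw [hxdef]; field_simp
    have hmul : u^(k+1) * (1+x)^(k+1) ≤ u^(k+1) * (1 + ((2:ℝ)^(k+1)-1)*x) :=
      mul_le_mul_of_nonneg_left h2 huk1.le
    have heq : u^(k+1) * (1 + ((2:ℝ)^(k+1)-1)*x) = u^(k+1) + ((2:ℝ)^(k+1)-1) := by
      calc u^(k+1) * (1 + ((2:ℝ)^(k+1)-1)*x)
          = u^(k+1) + ((2:ℝ)^(k+1)-1) * (u^(k+1) * x) := by ring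
        _ = u^(k+1) + ((2:ℝ)^(k+1)-1) := by rw [h3, mul_one]
    have h4 : t^(k+1) ≤ u^(k+1) + ((2:ℝ)^(k+1) - 1) := by
      rw [hv1] at htv; linarith
    unfold PsiK'
    rw [hBdef, ← hcdef, ← Real.exp_add]
    apply Real.exp_le_exp.2
    nlinarith [mul_le_mul_of_nonneg_left h4 hc.le]
  -- integral chain
  have hIoc : IntegrableOn (PsiK' k m) (Ioc u v) := (psiK'_cont k m).integrableOn_Ioc
  have hconst : IntegrableOn (fun _ : ℝ => B * PsiK' k m u) (Ioc u v) :=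
    integrableOn_const measure_Ioc_lt_top.ne
  have h5 : ∫ t in Ioc u v, (B * PsiK' k m u) ≤ ∫ t in Ioc u v, PsiK' k m t :=
    setIntegral_mono_on hconst hIoc measurableSet_Ioc hpt
  have h6 : ∫ t in Ioc u v, PsiK' k m t ≤ ∫ t in Ioi u, PsiK' k m t := by
    apply setIntegral_mono_set (psiK'_integrableOn k m hm u)
      (Eventually.of_forall fun t => (psiK'_pos k m t).le)
      (HasSubset.Subset.eventuallyLE Ioc_subset_Ioi_self)
  have h7 : ∫ t in Ioc u v, (B * PsiK' k m u) = (u^k)⁻¹ * (B * PsiK' k m u) := by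
    rw [setIntegral_const, measureReal_def, Real.volume_Ioc, smul_eq_mul,
      ENNReal.toReal_ofReal (by linarith : (0:ℝ) ≤ v - u)]
    congr 1
    rw [hvdef]; ring
  have : (u^k)⁻¹ * (B * PsiK' k m u) = B * PsiK' k m u / u^k := by field_simp
  linarith
end

section
variable (k : ℕ) (m : ℝ)

lemma tendstoG (hm : 0 < m) :
    Tendsto (fun v : ℝ => PsiK' k m v * v) atTop (𝓝 0) := by
  have hc : (0:ℝ) < m / ((k:ℝ)+1) := by positivity
  set c := m / ((k:ℝ)+1) with hcdef
  have hbound : Tendsto (fun v : ℝ => v * Real.exp (-(c * v))) atTop (𝓝 0) := by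
    have h1 : Tendsto (fun v : ℝ => c * v) atTop atTop :=
      (tendsto_id.const_mul_atTop hc)
    have h2 : Tendsto (fun y : ℝ => y ^ 1 * Real.exp (-y)) atTop (𝓝 0) :=
      Real.tendsto_pow_mul_exp_neg_atTop_nhds_zero 1
    have h3 := (h2.comp h1).const_mul (1/c)
    rw [mul_zero] at h3
    apply h3.congr
    intro v
    simp only [Function.comp_apply, pow_one]
    field_simp
  apply tendsto_of_tendsto_of_tendsto_of_le_of_le' tendsto_const_nhds hbound
  · filter_upwards [eventually_ge_atTop (0:ℝ)] with v hv
    exact mul_nonneg (psiK'_pos k m v).le hv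
  · filter_upwards [eventually_ge_atTop (1:ℝ)] with v hv
    have hv0 : (0:ℝ) ≤ v := by linarith
    have h4 : v ≤ v^(k+1) := le_self_pow₀ hv (Nat.succ_ne_zero k)
    have h5 : PsiK' k m v ≤ Real.exp (-(c * v)) := by
      unfold PsiK'
      rw [← hcdef]
      apply Real.exp_le_exp.2
      nlinarith
    calc PsiK' k m v * v ≤ Real.exp (-(c*v)) * v :=
        mul_le_mul_of_nonneg_right h5 hv0
      _ = v * Real.exp (-(c*v)) := mul_comm _ _
end

section
variable (k : ℕ) (m : ℝ)

lemma tendstoQ (hm : 0 < m) :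
    Tendsto (fun v : ℝ => (PsiK' k m v * v) /
      ((∫ t in Ioi v, PsiK' k m t) / CbetaK k m *
        (Real.log ((∫ t in Ioi v, PsiK' k m t) / CbetaK k m))^2)) atTop (𝓝 0) := by
  have hC : 0 < CbetaK k m := cbetaK_pos k m hm
  have hc : (0:ℝ) < m / ((k:ℝ)+1) := by positivity
  set c := m / ((k:ℝ)+1) with hcdef
  set C := CbetaK k m with hCdef
  set A := Real.exp (-c * ((2:ℝ)^(k+1) - 1)) with hAdef
  have hA : 0 < A := Real.exp_pos _
  set L := Real.log (m * C) with hLdef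
  set D := 4*C/(A*c^2) with hDdef
  have hD : 0 < D := by positivity
  have hbound : Tendsto (fun v : ℝ => D / v^(k+1)) atTop (𝓝 0) :=
    tendsto_const_nhds.div_atTop (tendsto_pow_atTop (Nat.succ_ne_zero k))
  have key : ∀ v : ℝ, 1 ≤ v → 2*|L| ≤ c*v^(k+1) →
      0 ≤ (PsiK' k m v * v) /
        ((∫ t in Ioi v, PsiK' k m t) / C * (Real.log ((∫ t in Ioi v, PsiK' k m t) / C))^2) ∧
      (PsiK' k m v * v) /
        ((∫ t in Ioi v, PsiK' k m t) / C * (Real.log ((∫ t in Ioi v, PsiK' k m t) / C))^2)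
        ≤ D / v^(k+1) := by
    intro v hv hvl
    have hv0 : (0:ℝ) < v := lt_of_lt_of_le one_pos hv
    have hvk : (0:ℝ) < v^k := pow_pos hv0 k
    have hvk1 : (0:ℝ) < v^(k+1) := pow_pos hv0 (k+1)
    have hvk1' : (1:ℝ) ≤ v^k := one_le_pow₀ hv
    have hP : 0 < PsiK' k m v := psiK'_pos k m v
    set T := ∫ t in Ioi v, PsiK' k m t with hTdef
    have hTlow : A * PsiK' k m v / v^k ≤ T := by
      rw [hAdef, hcdef]
      exact tail_lower k m hm hv
    have hTup : T ≤ PsiK' k m v / (m * v^k) := tail_upper k m hm hv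
    have hT0 : 0 < T := lt_of_lt_of_le (by positivity) hTlow
    set s := T / C with hsdef
    have hs0 : 0 < s := div_pos hT0 hC
    have hsup : s ≤ PsiK' k m v / (m*C) := by
      have h1 : PsiK' k m v / (m * v^k) ≤ PsiK' k m v / m := by
        apply div_le_div_of_nonneg_left hP.le hm
        nlinarith
      rw [hsdef]
      rw [div_le_div_iff₀ hC (by positivity)]
      have := le_trans hTup h1
      calc T * (m * C) = (T * m) * C := by ring
        _ ≤ (PsiK' k m v) * C := by
            apply mul_le_mul_of_nonneg_right _ hC.le
            have := mul_le_mul_of_nonneg_right this hm.le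
            rwa [div_mul_cancel₀ _ hm.ne'] at this
        _ = PsiK' k m v * C := rfl
    have hlogP : Real.log (PsiK' k m v) = -c * v^(k+1) := by
      unfold PsiK'
      rw [← hcdef, Real.log_exp]
    have hlog : Real.log s ≤ -(c*v^(k+1)) - L := by
      have h2 := Real.log_le_log hs0 hsup
      rwa [Real.log_div hP.ne' (by positivity : m*C ≠ 0), hlogP, ← hLdef, neg_mul] at h2
    have hhalf : Real.log s ≤ -(c*v^(k+1)/2) := by
      have h3 : -L ≤ |L| := neg_le_abs L
      have h4 : |L| ≤ c*v^(k+1)/2 := by linarith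
      linarith
    have hlneg : Real.log s < 0 := lt_of_le_of_lt hhalf (neg_lt_zero.mpr (by positivity))
    have hsq : (c*v^(k+1)/2)^2 ≤ (Real.log s)^2 := by
      have h5 : c*v^(k+1)/2 ≤ -Real.log s := by linarith
      calc (c*v^(k+1)/2)^2 ≤ (-Real.log s)^2 := by
            apply pow_le_pow_left₀ (by positivity) h5
        _ = (Real.log s)^2 := neg_sq _
    have hslow : A * PsiK' k m v / v^k / C ≤ s := by
      rw [hsdef]
      exact (div_le_div_iff_of_pos_right hC).2 hTlow
    have hDlow0 : 0 < A * PsiK' k m v / v^k / C * (c*v^(k+1)/2)^2 := by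
      apply mul_pos (div_pos (div_pos (mul_pos hA hP) hvk) hC) (by positivity)
    have hDle : A * PsiK' k m v / v^k / C * (c*v^(k+1)/2)^2 ≤ s * (Real.log s)^2 :=
      mul_le_mul hslow hsq (by positivity) hs0.le
    have hDpos : 0 < s * (Real.log s)^2 := lt_of_lt_of_le hDlow0 hDle
    have hN : 0 ≤ PsiK' k m v * v := mul_nonneg hP.le hv0.le
    constructor
    · exact div_nonneg hN hDpos.le
    · calc (PsiK' k m v * v) / (s * (Real.log s)^2)
          ≤ (PsiK' k m v * v) / (A * PsiK' k m v / v^k / C * (c*v^(k+1)/2)^2) := by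
            apply div_le_div_of_nonneg_left hN hDlow0 hDle
        _ = D / v^(k+1) := by
            rw [hDdef]
            field_simp
            ring
  have hvl : ∀ᶠ v : ℝ in atTop, 2*|L| ≤ c*v^(k+1) :=
    ((tendsto_pow_atTop (Nat.succ_ne_zero k)).const_mul_atTop hc).eventually_ge_atTop (2*|L|)
  apply tendsto_of_tendsto_of_tendsto_of_le_of_le' tendsto_const_nhds hbound
  · filter_upwards [eventually_ge_atTop (1:ℝ), hvl] with v hv h
    exact (key v hv h).1
  · filter_upwards [eventually_ge_atTop (1:ℝ), hvl] with v hv h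
    exact (key v hv h).2
end

theorem stmt15 (k : ℕ) (hk : 1 ≤ k) (m : ℝ) (hm : 0 < m) :
    Tendsto (fun s : ℝ => fK k m s / (s * (Real.log s) ^ 2)) (𝓝[>] (0:ℝ)) (𝓝 0) ∧
    Tendsto (fK k m) (𝓝[>] (0:ℝ)) (𝓝 0) := by
  have hC : 0 < CbetaK k m := cbetaK_pos k m hm
  have hmem : Ioo (0:ℝ) 1 ∈ 𝓝[>] (0:ℝ) := Ioo_mem_nhdsGT_of_mem ⟨le_rfl, one_pos⟩
  have hkey : ∀ s ∈ Ioo (0:ℝ) 1,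
      PsiK k m (PsiKInv k m ((1-s)*CbetaK k m)) = (1-s)*CbetaK k m ∧
      0 ≤ PsiKInv k m ((1-s)*CbetaK k m) ∧
      (∫ t in Ioi (PsiKInv k m ((1-s)*CbetaK k m)), PsiK' k m t) = s * CbetaK k m := by
    intro s hs
    have h0 : 0 ≤ (1-s)*CbetaK k m := mul_nonneg (by linarith [hs.2]) hC.le
    have h1 : (1-s)*CbetaK k m < CbetaK k m := by nlinarith [hs.1]
    have h2 := psiK_invFun_eq k m hm h0 h1
    have h3 := psiKInv_nonneg k m hm h0 h1
    refine ⟨h2, h3, ?_⟩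
    rw [tail_eq k m hm h3, h2]
    ring
  have hΦt : Tendsto (fun s : ℝ => PsiKInv k m ((1-s)*CbetaK k m)) (𝓝[>] 0) atTop := by
    rw [tendsto_atTop]
    intro M
    have hΨM : PsiK k m (max M 0) < CbetaK k m := psiK_lt_cbeta k m hm (max M 0)
    have hΨM0 : 0 ≤ PsiK k m (max M 0) := by
      have := (psiK_strictMono k m).monotone (le_max_right M 0)
      rwa [psiK_zero] at this
    set ε := (CbetaK k m - PsiK k m (max M 0))/CbetaK k m with hε
    have hε0 : 0 < ε := div_pos (by linarith) hC
    have hε1 : ε ≤ 1 := by rw [hε, div_le_one hC]; linarith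
    have hsub : Ioo (0:ℝ) ε ∈ 𝓝[>] (0:ℝ) := Ioo_mem_nhdsGT_of_mem ⟨le_rfl, hε0⟩
    filter_upwards [hsub] with s hs
    have hs1 : s ∈ Ioo (0:ℝ) 1 := ⟨hs.1, lt_of_lt_of_le hs.2 hε1⟩
    obtain ⟨h2, h3, _⟩ := hkey s hs1
    have hεC : ε * CbetaK k m = CbetaK k m - PsiK k m (max M 0) := by
      rw [hε, div_mul_cancel₀ _ hC.ne']
    have hlt : PsiK k m (max M 0) < PsiK k m (PsiKInv k m ((1-s)*CbetaK k m)) := by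
      rw [h2]
      nlinarith [hs.2, hC]
    have := (psiK_strictMono k m).lt_iff_lt.1 hlt
    linarith [le_max_left M 0]
  constructor
  · have hcomp := (tendstoQ k m hm).comp hΦt
    apply Tendsto.congr' _ hcomp
    filter_upwards [hmem] with s hs
    obtain ⟨h2, h3, h4⟩ := hkey s hs
    simp only [Function.comp_apply]
    rw [h4, mul_div_cancel_right₀ s hC.ne']
    rfl
  · have hcomp := (tendstoG k m hm).comp hΦt
    apply Tendsto.congr' _ hcomp
    filter_upwards [hmem] with s hs
    rfl
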